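/- arXiv:1606.08225 — 4 statements merged into one kernel-verified Lean document; each statement's English description precedes it below -/
import Mathlib

section
/- For every Borel probability measure μ on ℝ^N (N ≥ 1), there exists a point x ∈ ℝ^N such that every closed half-space containing x has μ-measure at least 1/(N+1). -/
open MeasureTheory

/-- The (half-space, or Tukey) depth of a point `x` with respect to a measure `μ`:
the infimum of the measures of closed half-spaces containing `x`. -/
noncomputable def depth {E : Type*} [NormedAddCommGroup E] [InnerProductSpace ℝ E] [MeasurableSpace E]
    (μ : Measure E) (x : E) : ENNReal :=
  ⨅ (v : E) (_ : ‖v‖ = 1) (a : ℝ) (_ : a ≤ (inner ℝ x v : ℝ)), μ {y | a ≤ (inner ℝ y v : ℝ)}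

/-- If each of at most `N + 1` sets has complement of measure less than `1/(N+1)`
(w.r.t. a probability measure), then their intersection is nonempty. -/
lemma rado_aux_inter_nonempty {α : Type*} [MeasurableSpace α]
    (μ : Measure α) [IsProbabilityMeasure μ]
    {ι : Type*} (J : Finset ι) (f : ι → Set α) (N : ℕ)
    (hcard : J.card ≤ N + 1)
    (h : ∀ j ∈ J, μ (f j)ᶜ < ((N : ENNReal) + 1)⁻¹) :
    (⋂ j ∈ J, f j).Nonempty := by
  have hN0 : ((N : ENNReal) + 1) ≠ 0 := by simp
  have hNtop : ((N : ENNReal) + 1) ≠ ⊤ := by simp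
  have hsum : ∑ j ∈ J, μ (f j)ᶜ < 1 := by
    rcases J.eq_empty_or_nonempty with rfl | hJne
    · simp
    obtain ⟨j0, hj0, hc⟩ := Finset.exists_mem_eq_sup J hJne (fun j => μ (f j)ᶜ)
    have hct : (J.sup fun j => μ (f j)ᶜ) < ((N : ENNReal) + 1)⁻¹ := by
      rw [hc]; exact h j0 hj0
    calc ∑ j ∈ J, μ (f j)ᶜ ≤ J.card • (J.sup fun j => μ (f j)ᶜ) :=
          Finset.sum_le_card_nsmul _ _ _ (fun j hj => Finset.le_sup (f := fun j => μ (f j)ᶜ) hj)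
      _ = (J.card : ENNReal) * (J.sup fun j => μ (f j)ᶜ) := nsmul_eq_mul _ _
      _ ≤ ((N : ENNReal) + 1) * (J.sup fun j => μ (f j)ᶜ) := by
          gcongr
          exact_mod_cast hcard
      _ < ((N : ENNReal) + 1) * ((N : ENNReal) + 1)⁻¹ :=
          (ENNReal.mul_lt_mul_iff_right hN0 hNtop).mpr hct
      _ = 1 := ENNReal.mul_inv_cancel hN0 hNtop
  by_contra hne
  rw [Set.not_nonempty_iff_eq_empty] at hne
  have huniv : (⋃ j ∈ J, (f j)ᶜ) = Set.univ := by
    rw [← Set.compl_empty, ← hne]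
    simp [Set.compl_iInter]
  have hle := measure_biUnion_finset_le (μ := μ) J (fun j => (f j)ᶜ)
  rw [huniv, measure_univ] at hle
  exact absurd (hle.trans_lt hsum) (lt_irrefl _)

set_option maxHeartbeats 1000000 in
/-- Rado's centerpoint theorem: every Borel probability measure on `ℝ^N` has a point of
depth at least `1/(N+1)`, i.e. every closed half-space containing that point has measure
at least `1/(N+1)`. -/
theorem rado_centerpoint (N : ℕ) (hN : 1 ≤ N)
    (μ : Measure (EuclideanSpace ℝ (Fin N))) [IsProbabilityMeasure μ] :
    ∃ x : EuclideanSpace ℝ (Fin N), ((N : ENNReal) + 1)⁻¹ ≤ depth μ x := by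
  classical
  set t : ENNReal := ((N : ENNReal) + 1)⁻¹ with ht
  have htpos : 0 < t := ENNReal.inv_pos.mpr (by simp)
  set E := EuclideanSpace ℝ (Fin N) with hE
  let G : E × ℝ → Set E := fun p => {y | (inner ℝ y p.1 : ℝ) ≤ p.2}
  have hGclosed : ∀ p, IsClosed (G p) := fun p =>
    isClosed_le (Continuous.inner continuous_id continuous_const) continuous_const
  have hGconv : ∀ p, Convex ℝ (G p) := fun p =>
    convex_halfSpace_le (f := fun y => (inner ℝ y p.1 : ℝ)) ⟨fun a b => inner_add_left _ _ _, fun c a => real_inner_smul_left _ _ _⟩ _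
  set S : Set (E × ℝ) := {p | μ (G p)ᶜ < t} with hS
  -- a big closed ball capturing most of the mass
  obtain ⟨R, hR⟩ : ∃ R : ℕ, μ (Metric.closedBall (0 : E) R)ᶜ < t := by
    have hanti : Antitone (fun n : ℕ => (Metric.closedBall (0 : E) n)ᶜ) := by
      intro n m hnm
      exact Set.compl_subset_compl.mpr
        (Metric.closedBall_subset_closedBall (by exact_mod_cast hnm))
    have hiInter : ⋂ n : ℕ, (Metric.closedBall (0 : E) n)ᶜ = ∅ := by
      ext y
      simp only [Set.mem_iInter, Set.mem_compl_iff, Metric.mem_closedBall,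
        Set.mem_empty_iff_false, iff_false, not_forall, not_not]
      obtain ⟨n, hn⟩ := exists_nat_ge (dist y (0 : E))
      exact ⟨n, hn⟩
    have htend := tendsto_measure_iInter_atTop
      (μ := μ) (s := fun n : ℕ => (Metric.closedBall (0 : E) n)ᶜ)
      (fun n => (Metric.isClosed_closedBall.measurableSet.compl).nullMeasurableSet)
      hanti ⟨0, measure_ne_top μ _⟩
    rw [hiInter, measure_empty] at htend
    exact (htend.eventually_lt_const htpos).exists
  -- finite intersections are nonempty (Helly)
  have key : ∀ I : Finset S, ((Metric.closedBall (0 : E) R) ∩ ⋂ p ∈ I, G p.val).Nonempty := by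
    intro I
    let f : Option {q : S // q ∈ I} → Set E :=
      fun o => o.elim (Metric.closedBall (0 : E) R) (fun q => G q.val.val)
    have hmem : ∀ j, μ (f j)ᶜ < t := by
      rintro (_ | q)
      · exact hR
      · exact q.val.prop
    have h_all : (⋂ j ∈ (Finset.univ : Finset (Option {q : S // q ∈ I})), f j).Nonempty := by
      apply Convex.helly_theorem' (𝕜 := ℝ)
      · rintro (_ | q) _
        · exact convex_closedBall _ _
        · exact hGconv _
      · intro J _ hJcard
        refine rado_aux_inter_nonempty μ J f N ?_ (fun j _ => hmem j)
        have hfr : Module.finrank ℝ E = N := finrank_euclideanSpace_fin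
        rwa [hfr] at hJcard
    obtain ⟨x, hx⟩ := h_all
    rw [Set.mem_iInter₂] at hx
    refine ⟨x, hx none (Finset.mem_univ _), ?_⟩
    rw [Set.mem_iInter₂]
    intro p hp
    exact hx (some ⟨p, hp⟩) (Finset.mem_univ _)
  have main : ((Metric.closedBall (0 : E) R) ∩ ⋂ p : S, G p.val).Nonempty :=
    IsCompact.inter_iInter_nonempty (isCompact_closedBall _ _)
      (fun p : S => G p.val) (fun p => hGclosed _) key
  obtain ⟨x, hxB, hxG⟩ := main
  rw [Set.mem_iInter] at hxG
  refine ⟨x, ?_⟩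
  unfold depth
  refine le_iInf fun v => le_iInf fun hv => le_iInf fun a => le_iInf fun ha => ?_
  by_contra hlt
  push_neg at hlt
  set A : ℕ → Set E := fun n => {y | a - 1 / ((n : ℝ) + 1) < (inner ℝ y v : ℝ)} with hA
  have hAopen : ∀ n, IsOpen (A n) := fun n =>
    isOpen_lt continuous_const (Continuous.inner continuous_id continuous_const)
  have hAanti : Antitone A := by
    intro n m hnm y hy
    have h1 : 1 / ((m : ℝ) + 1) ≤ 1 / ((n : ℝ) + 1) := by
      apply one_div_le_one_div_of_le (by positivity)
      exact_mod_cast add_le_add_left (Nat.cast_le.mpr hnm) 1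
    simp only [hA, Set.mem_setOf_eq] at hy ⊢
    linarith
  have hAint : ⋂ n, A n = {y | a ≤ (inner ℝ y v : ℝ)} := by
    ext y
    simp only [Set.mem_iInter, hA, Set.mem_setOf_eq]
    change (∀ n : ℕ, a - 1 / ((n : ℝ) + 1) < inner ℝ y v) ↔ a ≤ inner ℝ y v
    constructor
    · intro h
      by_contra hya
      push_neg at hya
      obtain ⟨n, hn⟩ := exists_nat_one_div_lt (sub_pos.mpr hya)
      have := h n
      linarith
    · intro h n
      have hpos : (0 : ℝ) < 1 / ((n : ℝ) + 1) := by positivity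
      linarith
  have htend := tendsto_measure_iInter_atTop (μ := μ)
    (fun n => (hAopen n).measurableSet.nullMeasurableSet) hAanti ⟨0, measure_ne_top μ _⟩
  rw [hAint] at htend
  obtain ⟨n, hn⟩ := (htend.eventually_lt_const hlt).exists
  have hpS : ((v, a - 1 / ((n : ℝ) + 1)) : E × ℝ) ∈ S := by
    have hco : (G (v, a - 1 / ((n : ℝ) + 1)))ᶜ = A n := by
      ext y
      simp [G, hA, not_le]
    show μ (G (v, a - 1 / ((n : ℝ) + 1)))ᶜ < t
    rwa [hco]
  have hxp : (inner ℝ x v : ℝ) ≤ a - 1 / ((n : ℝ) + 1) := hxG ⟨_, hpS⟩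
  have hpos : (0 : ℝ) < 1 / ((n : ℝ) + 1) := by positivity
  linarith
end

section
/- The depth function x ↦ depth_μ(x) of a Borel probability measure μ on ℝ^N is upper semicontinuous. -/
open MeasureTheory

/-- The depth function of a Borel probability measure on ℝ^N is upper semicontinuous. -/
theorem depth_upperSemicontinuous (N : ℕ)
    (μ : Measure (EuclideanSpace ℝ (Fin N))) [IsProbabilityMeasure μ] :
    UpperSemicontinuous (fun x : EuclideanSpace ℝ (Fin N) => depth μ x) := by
  intro x t ht
  rw [show (fun x : EuclideanSpace ℝ (Fin N) => depth μ x) x = depth μ x from rfl,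
    depth] at ht
  simp only [iInf_lt_iff] at ht
  obtain ⟨v, hv, a, ha, hμ⟩ := ht
  set S : ℕ → Set (EuclideanSpace ℝ (Fin N)) :=
    fun n => {y | a - 1/(n+1) ≤ (inner ℝ y v : ℝ)} with hS
  have hcont : Continuous fun y : EuclideanSpace ℝ (Fin N) => (inner ℝ y v : ℝ) :=
    continuous_id.inner continuous_const
  have hmeas : ∀ n, MeasurableSet (S n) := fun n =>
    measurableSet_le measurable_const hcont.measurable
  have hanti : Antitone S := by
    intro n m hnm y hy
    simp only [hS, Set.mem_setOf_eq] at hy ⊢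
    have : (1 : ℝ)/(n+1) ≥ 1/(m+1) := by
      apply one_div_le_one_div_of_le
      · positivity
      · exact_mod_cast Nat.succ_le_succ hnm
    linarith
  have hInter : ⋂ n, S n = {y | a ≤ (inner ℝ y v : ℝ)} := by
    ext y
    simp only [Set.mem_iInter, hS, Set.mem_setOf_eq]
    constructor
    · intro h
      have htend : Filter.Tendsto (fun n : ℕ => a - 1/(n+1 : ℝ)) Filter.atTop (nhds a) := by
        have := tendsto_one_div_add_atTop_nhds_zero_nat (𝕜 := ℝ)
        have := Filter.Tendsto.const_sub a this
        simpa using this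
      exact le_of_tendsto htend (Filter.Eventually.of_forall h)
    · intro h n
      have : (0:ℝ) < 1/(n+1) := by positivity
      linarith
  have htends : Filter.Tendsto (fun n => μ (S n)) Filter.atTop
      (nhds (μ {y | a ≤ (inner ℝ y v : ℝ)})) := by
    rw [← hInter]
    exact tendsto_measure_iInter_atTop (fun n => (hmeas n).nullMeasurableSet) hanti
      ⟨0, measure_ne_top μ _⟩
  obtain ⟨n, hn⟩ := (htends.eventually (gt_mem_nhds hμ)).exists
  have hpos : (0:ℝ) < 1/(n+1) := by positivity
  have hopen : IsOpen {x' : EuclideanSpace ℝ (Fin N) | a - 1/(n+1) < (inner ℝ x' v : ℝ)} :=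
    isOpen_lt continuous_const hcont
  have hxmem : x ∈ {x' : EuclideanSpace ℝ (Fin N) | a - 1/(n+1) < (inner ℝ x' v : ℝ)} := by
    simp only [Set.mem_setOf_eq]; linarith
  filter_upwards [hopen.mem_nhds hxmem] with x' hx'
  replace hx' : a - 1/(n+1) < (inner ℝ x' v : ℝ) := hx'
  calc depth μ x' ≤ μ (S n) := by
        refine iInf_le_of_le v (iInf_le_of_le hv (iInf_le_of_le (a - 1/(n+1))
          (iInf_le_of_le hx'.le ?_)))
        exact le_refl _
    _ < t := hn
end

section
/- Let μ be a Borel probability measure on ℝ^N with compact support. Then the supremum of depth_μ over ℝ^N is attained at some point. -/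
open MeasureTheory

section aux

variable (N : ℕ) (μ : Measure (EuclideanSpace ℝ (Fin N)))

/-- Strict sublevel sets of the depth function are open (upper semicontinuity). -/
lemma depth_lt_eventually [IsProbabilityMeasure μ] (x : EuclideanSpace ℝ (Fin N))
    (c : ENNReal) (h : depth μ x < c) : ∀ᶠ x' in nhds x, depth μ x' < c := by
  simp only [depth, iInf_lt_iff] at h
  obtain ⟨v, hv, a, ha, hμ⟩ := h
  set A : ℕ → Set (EuclideanSpace ℝ (Fin N)) :=
    fun n => {y | a - 1 / (n + 1) ≤ (inner ℝ y v : ℝ)} with hA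
  have hclosed : ∀ n, IsClosed (A n) := fun n =>
    isClosed_le continuous_const ((continuous_id.inner continuous_const))
  have hanti : Antitone A := by
    intro n m hnm y hy
    simp only [hA, Set.mem_setOf_eq] at hy ⊢
    have : (1 : ℝ) / (m + 1) ≤ 1 / (n + 1) := by
      apply one_div_le_one_div_of_le (by positivity)
      exact_mod_cast Nat.succ_le_succ hnm
    linarith
  have hiInter : ⋂ n, A n = {y | a ≤ (inner ℝ y v : ℝ)} := by
    ext y
    simp only [Set.mem_iInter, hA, Set.mem_setOf_eq]
    constructor
    · intro hy
      by_contra hlt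
      push_neg at hlt
      obtain ⟨n, hn⟩ := exists_nat_one_div_lt (show (0:ℝ) < a - inner ℝ y v by linarith)
      have := hy n
      linarith
    · intro hy n; have : (0:ℝ) < 1 / (n + 1) := by positivity
      linarith
  have htend : Filter.Tendsto (μ ∘ A) Filter.atTop (nhds (μ (⋂ n, A n))) :=
    tendsto_measure_iInter_atTop
      (fun n => ((hclosed n).measurableSet).nullMeasurableSet)
      hanti ⟨0, measure_ne_top μ _⟩
  rw [hiInter] at htend
  obtain ⟨n, hn⟩ := (htend.eventually_lt_const hμ).exists
  have hopen : IsOpen {x' : EuclideanSpace ℝ (Fin N) | a - 1 / (n + 1) < (inner ℝ x' v : ℝ)} :=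
    isOpen_lt continuous_const ((continuous_id.inner continuous_const))
  have hxmem : x ∈ {x' : EuclideanSpace ℝ (Fin N) | a - 1 / (n + 1) < (inner ℝ x' v : ℝ)} := by
    have : (0:ℝ) < 1 / (n + 1) := by positivity
    simp only [Set.mem_setOf_eq]; linarith
  filter_upwards [hopen.mem_nhds hxmem] with x' hx'
  calc depth μ x' ≤ μ (A n) := by
        refine iInf_le_of_le v (iInf_le_of_le hv (iInf_le_of_le (a - 1 / (n + 1))
          (iInf_le_of_le (le_of_lt hx') ?_)))
        exact le_refl _
    _ < c := hn

/-- Far away from a null-complement compact set, the depth vanishes. -/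
lemma depth_eq_zero_of_far (K : Set (EuclideanSpace ℝ (Fin N))) (hμK : μ Kᶜ = 0)
    (R : ℝ) (hR0 : 0 ≤ R) (hKR : K ⊆ Metric.closedBall 0 R)
    (y : EuclideanSpace ℝ (Fin N)) (hy : R < ‖y‖) : depth μ y = 0 := by
  have hy0 : y ≠ 0 := by
    intro h; rw [h, norm_zero] at hy; linarith
  have hny : (0:ℝ) < ‖y‖ := norm_pos_iff.mpr hy0
  set v : EuclideanSpace ℝ (Fin N) := ‖y‖⁻¹ • y with hvdef
  have hv : ‖v‖ = 1 := by
    rw [hvdef, norm_smul, norm_inv, norm_norm, inv_mul_cancel₀ (ne_of_gt hny)]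
  have hinner : (inner ℝ y v : ℝ) = ‖y‖ := by
    rw [hvdef, real_inner_smul_right, real_inner_self_eq_norm_sq]
    field_simp
  have hsub : {z : EuclideanSpace ℝ (Fin N) | ‖y‖ ≤ (inner ℝ z v : ℝ)} ⊆ Kᶜ := by
    intro z hz hzK
    have h1 : (inner ℝ z v : ℝ) ≤ ‖z‖ := by
      calc (inner ℝ z v : ℝ) ≤ ‖z‖ * ‖v‖ := real_inner_le_norm z v
        _ = ‖z‖ := by rw [hv, mul_one]
    have h2 : ‖z‖ ≤ R := by
      have := hKR hzK
      simpa [Metric.mem_closedBall, dist_zero_right] using this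
    exact absurd hz (by simp only [Set.mem_setOf_eq]; push_neg; linarith)
  refine le_antisymm ?_ zero_le
  calc depth μ y ≤ μ {z | ‖y‖ ≤ (inner ℝ z v : ℝ)} := by
        refine iInf_le_of_le v (iInf_le_of_le hv (iInf_le_of_le ‖y‖
          (iInf_le_of_le (le_of_eq hinner.symm) (le_refl _))))
    _ ≤ μ Kᶜ := measure_mono hsub
    _ = 0 := hμK

end aux

/-- If a Borel probability measure on ℝ^N has compact support, then the supremum of the
depth function is attained at some point. -/
theorem depth_sup_attained (N : ℕ)
    (μ : Measure (EuclideanSpace ℝ (Fin N))) [IsProbabilityMeasure μ]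
    (K : Set (EuclideanSpace ℝ (Fin N))) (hK : IsCompact K) (hμK : μ Kᶜ = 0) :
    ∃ x : EuclideanSpace ℝ (Fin N), ∀ y, depth μ y ≤ depth μ x := by
  obtain ⟨r, hr⟩ := hK.isBounded.subset_closedBall 0
  set R : ℝ := max r 0 with hRdef
  have hKR : K ⊆ Metric.closedBall 0 R :=
    hr.trans (Metric.closedBall_subset_closedBall (le_max_left _ _))
  have hR0 : (0:ℝ) ≤ R := le_max_right _ _
  set B : Set (EuclideanSpace ℝ (Fin N)) := Metric.closedBall 0 (R + 1) with hBdef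
  have hBcompact : IsCompact B := isCompact_closedBall 0 (R + 1)
  set M : ENNReal := ⨆ y, depth μ y with hM
  -- superlevel sets indexed by c < M
  set t : {c : ENNReal // c < M} → Set (EuclideanSpace ℝ (Fin N)) :=
    fun c => {x | c.1 ≤ depth μ x} with ht
  have htc : ∀ c, IsClosed (t c) := by
    intro c
    rw [← isOpen_compl_iff]
    rw [isOpen_iff_eventually]
    intro x hx
    simp only [ht, Set.mem_compl_iff, Set.mem_setOf_eq, not_le] at hx
    filter_upwards [depth_lt_eventually N μ x c.1 hx] with x' hx'
    simp only [ht, Set.mem_compl_iff, Set.mem_setOf_eq, not_le]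
    exact hx'
  have hfar : ∀ y : EuclideanSpace ℝ (Fin N), y ∉ B → depth μ y = 0 := by
    intro y hyB
    apply depth_eq_zero_of_far N μ K hμK R hR0 hKR
    simp only [hBdef, Metric.mem_closedBall, dist_zero_right, not_le] at hyB
    linarith
  have hfip : ∀ u : Finset {c : ENNReal // c < M}, (B ∩ ⋂ c ∈ u, t c).Nonempty := by
    intro u
    rcases u.eq_empty_or_nonempty with hu | hu
    · refine ⟨0, ?_, ?_⟩
      · simp [hBdef]; linarith
      · simp [hu]
    · obtain ⟨c₀, hc₀⟩ := hu
      have hMpos : 0 < M := lt_of_le_of_lt (zero_le : 0 ≤ c₀.1) c₀.2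
      set cs : ENNReal := u.sup (fun c => c.1) with hcs
      have hcsM : cs < M := by
        rw [hcs, Finset.sup_lt_iff hMpos]
        exact fun c _ => c.2
      obtain ⟨y, hy⟩ := lt_iSup_iff.mp (hM ▸ hcsM)
      have hyB : y ∈ B := by
        by_contra hyB
        rw [hfar y hyB] at hy
        exact absurd hy (not_lt.mpr zero_le)
      refine ⟨y, hyB, ?_⟩
      simp only [Set.mem_iInter]
      intro c hc
      exact le_trans (Finset.le_sup (f := fun c => c.1) hc) (le_of_lt hy)
  obtain ⟨x₀, hx₀B, hx₀⟩ := hBcompact.inter_iInter_nonempty t htc hfip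
  refine ⟨x₀, fun y => ?_⟩
  have hMx₀ : M ≤ depth μ x₀ := by
    by_contra hlt
    push_neg at hlt
    obtain ⟨c, hc1, hc2⟩ := exists_between hlt
    have := Set.mem_iInter.mp hx₀ ⟨c, hc2⟩
    simp only [ht, Set.mem_setOf_eq] at this
    exact absurd hc1 (not_lt.mpr this)
  exact le_trans (le_iSup (depth μ) y) hMx₀
end

section
/- Let γ be the tautological n-plane bundle over the real Grassmannian G_n(ℝ^N) with 2n ≤ N. Then the (N−n)-th power of the top Stiefel–Whitney class, w_n(γ)^{N−n}, is nonzero in H^{n(N−n)}(G_n(ℝ^N); F₂). -/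
open MvPolynomial Finset

/-- The Stiefel–Whitney class `w i` of the tautological `n`-plane bundle, as a generator of
the Borel presentation of `H^*(G_n(ℝ^N); F₂)`. -/
noncomputable def swW (n : ℕ) (i : ℕ) : MvPolynomial (ℕ ⊕ ℕ) (ZMod 2) :=
  if i = 0 then 1 else if i ≤ n then X (Sum.inl i) else 0

/-- The dual Stiefel–Whitney class `w̄ j` (of the complementary `q = N - n` plane bundle). -/
noncomputable def swWbar (q : ℕ) (j : ℕ) : MvPolynomial (ℕ ⊕ ℕ) (ZMod 2) :=
  if j = 0 then 1 else if j ≤ q then X (Sum.inr j) else 0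

/-- The degree-`d` component of the relation `w · w̄ = 1`. -/
noncomputable def swRel (n q d : ℕ) : MvPolynomial (ℕ ⊕ ℕ) (ZMod 2) :=
  ∑ i ∈ Finset.range (d + 1), swW n i * swWbar q (d - i)

/-- The ideal of relations in the Borel presentation
`H^*(G_n(ℝ^N); F₂) ≅ F₂[w₁,…,w_n,w̄₁,…,w̄_{N-n}] / (w·w̄ = 1)`. -/
noncomputable def grassIdeal (n q : ℕ) : Ideal (MvPolynomial (ℕ ⊕ ℕ) (ZMod 2)) :=
  Ideal.span (Set.range fun d => swRel n q (d + 1))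


noncomputable def hmono (n m : ℕ) : MvPolynomial (Fin n) (ZMod 2) :=
  ∑ μ ∈ Finset.finsuppAntidiag Finset.univ m, monomial μ 1

noncomputable def esym (n i : ℕ) : MvPolynomial (Fin n) (ZMod 2) :=
  ∑ A ∈ Finset.powersetCard i Finset.univ, monomial (∑ j ∈ A, Finsupp.single j 1) 1

noncomputable def sfin (n q : ℕ) (σ : Equiv.Perm (Fin n)) : Fin n →₀ ℕ :=
  Finsupp.equivFunOnFinite.symm fun i => q + (σ i).val - i.val

noncomputable def eps (n q : ℕ) (f : MvPolynomial (Fin n) (ZMod 2)) : ZMod 2 :=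
  ∑ σ : Equiv.Perm (Fin n), coeff (sfin n q σ) f

lemma coeff_hmono (n m : ℕ) (μ : Fin n →₀ ℕ) :
    coeff μ (hmono n m) = if (∑ i, μ i) = m then 1 else 0 := by
  rw [hmono, coeff_sum]
  simp only [coeff_monomial]
  rw [Finset.sum_ite_eq' _ μ (fun _ => (1 : ZMod 2))]
  simp [Finset.mem_finsuppAntidiag]

lemma sfin_apply (n q : ℕ) (σ : Equiv.Perm (Fin n)) (i : Fin n) :
    sfin n q σ i = q + (σ i).val - i.val := rfl

lemma sum_sfin (n q : ℕ) (hq : n ≤ q) (σ : Equiv.Perm (Fin n)) :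
    ∑ i, sfin n q σ i = n * q := by
  have h1 : ∀ i : Fin n, sfin n q σ i + i.val = q + (σ i).val := by
    intro i
    have : i.val ≤ q + (σ i).val := le_trans (le_of_lt i.isLt) (by omega)
    rw [sfin_apply]
    omega
  have h2 : (∑ i, sfin n q σ i) + ∑ i : Fin n, i.val
      = ∑ i : Fin n, (q + (σ i).val) := by
    rw [← Finset.sum_add_distrib]
    exact Finset.sum_congr rfl fun i _ => h1 i
  have h3 : ∑ i : Fin n, (σ i).val = ∑ i : Fin n, i.val :=
    Equiv.sum_comp σ (fun i => i.val)
  rw [Finset.sum_add_distrib, h3] at h2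
  simp only [Finset.sum_const, Finset.card_univ, Fintype.card_fin, smul_eq_mul] at h2
  omega

lemma zmod2_units_smul (u : ℤˣ) (x : ZMod 2) : u • x = x := by
  rcases Int.units_eq_one_or u with h | h <;> subst h
  · simp
  · simp only [Units.smul_def, Units.coe_neg_one, neg_smul, one_smul]
    exact (CharTwo.neg_eq x)

lemma boole_det_zero (n q : ℕ) (b : Fin n → ℕ)
    (hb : (∑ i, b i) + q < n * q + ∑ i : Fin n, i.val) :
    ∑ σ : Equiv.Perm (Fin n), (if ∀ i, b i ≤ q + (σ i).val then (1:ZMod 2) else 0) = 0 := by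
  have hn : 0 < n := by
    rcases Nat.eq_zero_or_pos n with h | h
    · subst h; simp at hb
    · exact h
  set A : Matrix (Fin n) (Fin n) (ZMod 2) :=
    fun v p => if b p ≤ q + v.val then 1 else 0 with hA
  have hdet : A.det = ∑ σ : Equiv.Perm (Fin n),
      (if ∀ i, b i ≤ q + (σ i).val then (1:ZMod 2) else 0) := by
    rw [Matrix.det_apply]
    refine Finset.sum_congr rfl fun σ _ => ?_
    rw [zmod2_units_smul]
    rw [Finset.prod_boole]
    congr 1
    exact eq_iff_iff.mpr ⟨fun h i => h i (Finset.mem_univ i), fun h i _ => h i⟩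
  rw [← hdet]
  by_cases hcol : ∃ p, q + n ≤ b p
  · obtain ⟨p, hp⟩ := hcol
    refine Matrix.det_eq_zero_of_column_eq_zero p fun v => ?_
    simp only [hA]
    rw [if_neg]
    omega
  · push_neg at hcol
    set tf : Fin n → Fin n := fun p => ⟨b p - q, by have := hcol p; omega⟩ with htf
    by_cases hinj : Function.Injective tf
    · exfalso
      have hbij : Function.Bijective tf := Finite.injective_iff_bijective.mp hinj
      have hsum : ∑ p, (tf p).val = ∑ i : Fin n, i.val :=
        Equiv.sum_comp (Equiv.ofBijective tf hbij) (fun i => i.val)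
      have hstep : ∀ p, q + (tf p).val ≤ b p + (if tf p = (⟨0, hn⟩ : Fin n) then q else 0) := by
        intro p
        by_cases h0 : tf p = (⟨0, hn⟩ : Fin n)
        · rw [if_pos h0, h0]
          simp
        · rw [if_neg h0]
          have hval : (tf p).val = b p - q := rfl
          have hne : (tf p).val ≠ 0 := by
            intro hc
            exact h0 (Fin.ext hc)
          omega
      have hsum2 : ∑ p : Fin n, (q + (tf p).val)
          ≤ (∑ p, b p) + ∑ p, (if tf p = (⟨0, hn⟩ : Fin n) then q else 0) := by
        rw [← Finset.sum_add_distrib]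
        exact Finset.sum_le_sum fun p _ => hstep p
      have hif : ∑ p, (if tf p = (⟨0, hn⟩ : Fin n) then q else 0)
          = ∑ v : Fin n, (if v = (⟨0, hn⟩ : Fin n) then q else 0) :=
        Equiv.sum_comp (Equiv.ofBijective tf hbij)
          (fun v => if v = (⟨0, hn⟩ : Fin n) then q else 0)
      rw [hif, Finset.sum_ite_eq' Finset.univ (⟨0, hn⟩ : Fin n) (fun _ => q),
        if_pos (Finset.mem_univ _)] at hsum2
      rw [Finset.sum_add_distrib, hsum] at hsum2
      simp only [Finset.sum_const, Finset.card_univ, Fintype.card_fin, smul_eq_mul] at hsum2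
      omega
    · rw [Function.not_injective_iff] at hinj
      obtain ⟨p, p', hpe, hpne⟩ := hinj
      refine Matrix.det_zero_of_column_eq hpne fun v => ?_
      simp only [hA]
      have h1 : b p - q = b p' - q := congrArg Fin.val hpe
      have : (b p ≤ q + v.val) ↔ (b p' ≤ q + v.val) := by omega
      exact if_congr this rfl rfl

lemma eps_add (n q : ℕ) (f g : MvPolynomial (Fin n) (ZMod 2)) :
    eps n q (f + g) = eps n q f + eps n q g := by
  simp [eps, coeff_add, Finset.sum_add_distrib]

lemma eps_zero (n q : ℕ) : eps n q 0 = 0 := by simp [eps]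

lemma eps_sum {ι : Type*} (n q : ℕ) (s : Finset ι) (f : ι → MvPolynomial (Fin n) (ZMod 2)) :
    eps n q (∑ i ∈ s, f i) = ∑ i ∈ s, eps n q (f i) := by
  simp [eps, coeff_sum]
  rw [Finset.sum_comm]

lemma eps_monomial_mul_hmono (n q m : ℕ) (hn : 1 ≤ n) (hq : n ≤ q) (hm : q < m)
    (α : Fin n →₀ ℕ) (c : ZMod 2) :
    eps n q (monomial α c * hmono n m) = 0 := by
  rw [eps]
  have key : ∀ σ : Equiv.Perm (Fin n),
      coeff (sfin n q σ) (monomial α c * hmono n m)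
      = c * (if ((∑ i, α i) + m = n * q ∧ ∀ i, α i + i.val ≤ q + (σ i).val)
          then 1 else 0) := by
    intro σ
    rw [coeff_monomial_mul', coeff_hmono]
    have hle : (α ≤ sfin n q σ) ↔ ∀ i, α i + i.val ≤ q + (σ i).val := by
      rw [Finsupp.le_def]
      apply forall_congr'
      intro i
      rw [sfin_apply]
      have hiq : i.val < q := lt_of_lt_of_le i.isLt hq
      omega
    by_cases h : α ≤ sfin n q σ
    · rw [if_pos h]
      have hsub : ∀ i, (sfin n q σ - α) i = sfin n q σ i - α i := fun i =>
        Finsupp.tsub_apply _ _ _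
      have hsum : (∑ i, (sfin n q σ - α) i) + ∑ i, α i = ∑ i, sfin n q σ i := by
        rw [← Finset.sum_add_distrib]
        refine Finset.sum_congr rfl fun i _ => ?_
        rw [hsub i]
        have := Finsupp.le_def.mp h i
        omega
      rw [sum_sfin n q hq σ] at hsum
      have hdeg : (∑ i, (sfin n q σ - α) i) = m ↔ (∑ i, α i) + m = n * q := by omega
      by_cases h2 : (∑ i, (sfin n q σ - α) i) = m
      · rw [if_pos h2, if_pos ⟨hdeg.mp h2, hle.mp h⟩, mul_one]
      · rw [if_neg h2, if_neg, mul_zero]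
        intro hc
        exact h2 (hdeg.mpr hc.1)
    · rw [if_neg h, if_neg, mul_zero]
      intro hc
      exact h (hle.mpr hc.2)
  rw [Finset.sum_congr rfl fun σ _ => key σ]
  by_cases hdeg : (∑ i, α i) + m = n * q
  · simp only [hdeg, true_and, ← Finset.mul_sum]
    have hb : (∑ i, (fun i => α i + i.val) i) + q < n * q + ∑ i : Fin n, i.val := by
      rw [Finset.sum_add_distrib]
      omega
    rw [boole_det_zero n q (fun i => α i + i.val) hb, mul_zero]
  · simp [hdeg]

lemma eps_mul_hmono (n q m : ℕ) (hn : 1 ≤ n) (hq : n ≤ q) (hm : q < m)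
    (f : MvPolynomial (Fin n) (ZMod 2)) :
    eps n q (f * hmono n m) = 0 := by
  conv_lhs => rw [f.as_sum, Finset.sum_mul, eps_sum]
  refine Finset.sum_eq_zero fun α _ => eps_monomial_mul_hmono n q m hn hq hm α _

lemma esym_top (n : ℕ) :
    esym n n = monomial (∑ j : Fin n, Finsupp.single j 1) 1 := by
  rw [esym]
  have : Finset.powersetCard n (Finset.univ : Finset (Fin n)) = {Finset.univ} := by
    have h := Finset.powersetCard_self (Finset.univ : Finset (Fin n))
    rwa [Finset.card_fin n] at h
  rw [this, Finset.sum_singleton]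

lemma eps_esym_top_pow (n q : ℕ) (hn : 1 ≤ n) (hq : n ≤ q) :
    eps n q ((esym n n) ^ q) = 1 := by
  rw [esym_top, monomial_pow, one_pow, eps]
  have hν : ∀ i : Fin n, (q • ∑ j : Fin n, Finsupp.single j 1) i = q := by
    intro i
    rw [Finsupp.smul_apply, Finset.sum_apply']
    rw [Finset.sum_eq_single i (fun j _ hj => Finsupp.single_eq_of_ne' hj)
      (fun h => absurd (Finset.mem_univ i) h)]
    simp
  have key : ∀ σ : Equiv.Perm (Fin n),
      ((q • ∑ j : Fin n, Finsupp.single j 1) = sfin n q σ) ↔ σ = 1 := by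
    intro σ
    constructor
    · intro h
      ext i
      have h2 := congrArg (fun f => f i) h
      simp only [hν i, sfin_apply] at h2
      have hiq : i.val < q := lt_of_lt_of_le i.isLt hq
      have : (σ i).val = i.val := by omega
      simpa [Fin.ext_iff] using this
    · intro h
      subst h
      ext i
      simp only [hν i, sfin_apply, Equiv.Perm.one_apply]
      have hiq : i.val < q := lt_of_lt_of_le i.isLt hq
      omega
  have : ∀ σ : Equiv.Perm (Fin n),
      coeff (sfin n q σ) (monomial (q • ∑ j : Fin n, Finsupp.single j 1) (1 : ZMod 2))
      = if σ = 1 then 1 else 0 := by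
    intro σ
    rw [coeff_monomial, if_congr (key σ) rfl rfl]
  rw [Finset.sum_congr rfl fun σ _ => this σ]
  rw [Finset.sum_ite_eq' Finset.univ (1 : Equiv.Perm (Fin n)) (fun _ => (1 : ZMod 2))]
  simp

lemma ind_apply {n : ℕ} (A : Finset (Fin n)) (i : Fin n) :
    (∑ j ∈ A, Finsupp.single j 1) i = if i ∈ A then 1 else 0 := by
  rw [Finset.sum_apply']
  simp only [Finsupp.single_apply]
  exact Finset.sum_ite_eq' A i (fun _ => 1)

lemma card_le_degsum {n : ℕ} (μ : Fin n →₀ ℕ) (A : Finset (Fin n))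
    (hA : ∀ j ∈ A, 1 ≤ μ j) : A.card ≤ ∑ i, μ i := by
  calc A.card = ∑ j ∈ A, 1 := by simp
  _ ≤ ∑ j ∈ A, μ j := Finset.sum_le_sum hA
  _ ≤ ∑ i, μ i := Finset.sum_le_sum_of_subset (Finset.subset_univ A)

lemma coeff_esym_mul_hmono {n : ℕ} (i k : ℕ) (μ : Fin n →₀ ℕ) :
    coeff μ (esym n i * hmono n k)
    = ∑ A ∈ Finset.powersetCard i Finset.univ,
        (if (∀ j ∈ A, 1 ≤ μ j) ∧ (∑ t, μ t) = k + A.card then (1 : ZMod 2) else 0) := by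
  rw [esym, Finset.sum_mul, coeff_sum]
  refine Finset.sum_congr rfl fun A _ => ?_
  rw [coeff_monomial_mul', coeff_hmono]
  have hle : ((∑ j ∈ A, Finsupp.single j 1) ≤ μ) ↔ ∀ j ∈ A, 1 ≤ μ j := by
    rw [Finsupp.le_def]
    constructor
    · intro h j hj
      have := h j
      rwa [ind_apply, if_pos hj] at this
    · intro h j
      rw [ind_apply]
      split_ifs with hj
      · exact h j hj
      · exact Nat.zero_le _
  by_cases h : (∑ j ∈ A, Finsupp.single j 1) ≤ μ
  · rw [if_pos h]
    have hsub : (∑ t, (μ - ∑ j ∈ A, Finsupp.single j 1 : Fin n →₀ ℕ) t) + A.card = ∑ t, μ t := by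
      have : ∀ t, (μ - ∑ j ∈ A, Finsupp.single j 1 : Fin n →₀ ℕ) t + (if t ∈ A then 1 else 0) = μ t := by
        intro t
        rw [Finsupp.tsub_apply, ind_apply]
        have h2 := Finsupp.le_def.mp h t
        rw [ind_apply] at h2
        omega
      calc (∑ t, (μ - ∑ j ∈ A, Finsupp.single j 1 : Fin n →₀ ℕ) t) + A.card
          = ∑ t, ((μ - ∑ j ∈ A, Finsupp.single j 1 : Fin n →₀ ℕ) t + (if t ∈ A then 1 else 0)) := by
            rw [Finset.sum_add_distrib]
            congr 1
            rw [Finset.sum_ite_mem, Finset.univ_inter, Finset.sum_const, smul_eq_mul, mul_one]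
      _ = ∑ t, μ t := Finset.sum_congr rfl fun t _ => this t
    have hcard : A.card ≤ ∑ t, μ t := card_le_degsum μ A (hle.mp h)
    have : ((∑ t, (μ - ∑ j ∈ A, Finsupp.single j 1 : Fin n →₀ ℕ) t) = k)
        ↔ ((∀ j ∈ A, 1 ≤ μ j) ∧ (∑ t, μ t) = k + A.card) := by
      constructor
      · intro h2
        exact ⟨hle.mp h, by omega⟩
      · intro h2
        omega
    rw [if_congr this rfl rfl, one_mul]
  · rw [if_neg h, if_neg]
    intro hc
    exact h (hle.mpr hc.1)

lemma rel_identity (n d : ℕ) (hd : 1 ≤ d) :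
    ∑ i ∈ Finset.range (d + 1), esym n i * hmono n (d - i) = 0 := by
  rw [MvPolynomial.eq_zero_iff]
  intro μ
  rw [coeff_sum]
  rw [Finset.sum_congr rfl fun i _ => coeff_esym_mul_hmono i (d - i) μ]
  by_cases hμ : (∑ t, μ t) = d
  · have hterm : ∀ i ∈ Finset.range (d + 1),
        ∑ A ∈ Finset.powersetCard i Finset.univ,
          (if (∀ j ∈ A, 1 ≤ μ j) ∧ (∑ t, μ t) = (d - i) + A.card then (1 : ZMod 2) else 0)
        = ((Finset.powersetCard i (Finset.univ.filter fun j => 1 ≤ μ j)).card : ZMod 2) := by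
      intro i hi
      rw [Finset.mem_range] at hi
      have : ∀ A ∈ Finset.powersetCard i Finset.univ,
          (if (∀ j ∈ A, 1 ≤ μ j) ∧ (∑ t, μ t) = (d - i) + A.card then (1 : ZMod 2) else 0)
          = if A ∈ Finset.powersetCard i (Finset.univ.filter fun j => 1 ≤ μ j)
            then 1 else 0 := by
        intro A hA
        rw [Finset.mem_powersetCard] at hA
        have hcA : A.card = i := hA.2
        have hmem : A ∈ Finset.powersetCard i (Finset.univ.filter fun j => 1 ≤ μ j)
            ↔ (A ⊆ Finset.univ.filter fun j => 1 ≤ μ j) ∧ A.card = i :=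
          Finset.mem_powersetCard
        by_cases hsub : ∀ j ∈ A, 1 ≤ μ j
        · have hcard := card_le_degsum μ A hsub
          rw [if_pos ⟨hsub, by omega⟩, if_pos (hmem.mpr
            ⟨fun j hj => Finset.mem_filter.mpr ⟨Finset.mem_univ j, hsub j hj⟩, hcA⟩)]
        · rw [if_neg (fun hc => hsub hc.1), if_neg]
          intro hc
          exact hsub fun j hj => (Finset.mem_filter.mp ((hmem.mp hc).1 hj)).2
      rw [Finset.sum_congr rfl this, Finset.sum_ite_mem]
      rw [Finset.inter_comm, Finset.inter_eq_left.mpr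
        (Finset.powersetCard_mono (Finset.filter_subset _ _))]
      simp
    rw [Finset.sum_congr rfl hterm]
    set k := (Finset.univ.filter fun j => 1 ≤ μ j).card with hk
    have hkd : k ≤ d := by
      rw [hk, ← hμ]
      calc (Finset.univ.filter fun j => 1 ≤ μ j).card
          = ∑ j ∈ Finset.univ.filter fun j => 1 ≤ μ j, 1 := by simp
      _ ≤ ∑ j ∈ Finset.univ.filter fun j => 1 ≤ μ j, μ j :=
          Finset.sum_le_sum fun j hj => (Finset.mem_filter.mp hj).2
      _ ≤ ∑ t, μ t := Finset.sum_le_sum_of_subset (Finset.filter_subset _ _)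
    have hk1 : 1 ≤ k := by
      have : ∃ j, 1 ≤ μ j := by
        by_contra hc
        push_neg at hc
        have : (∑ t, μ t) = 0 := Finset.sum_eq_zero fun t _ => by have := hc t; omega
        omega
      obtain ⟨j, hj⟩ := this
      exact Finset.card_pos.mpr ⟨j, Finset.mem_filter.mpr ⟨Finset.mem_univ j, hj⟩⟩
    have hcards : ∀ i, (Finset.powersetCard i
        (Finset.univ.filter fun j => 1 ≤ μ j)).card = Nat.choose k i := fun i =>
      Finset.card_powersetCard i _
    rw [Finset.sum_congr rfl fun i _ => by rw [hcards i]]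
    rw [← Nat.cast_sum]
    have hsum : ∑ i ∈ Finset.range (d + 1), Nat.choose k i = 2 ^ k := by
      rw [← Nat.sum_range_choose k]
      symm
      apply Finset.sum_subset
      · intro x hx
        rw [Finset.mem_range] at hx ⊢
        omega
      · intro x _ hx
        rw [Finset.mem_range] at hx
        exact Nat.choose_eq_zero_of_lt (by omega)
    rw [hsum]
    rw [Nat.cast_pow]
    have h2 : ((2 : ℕ) : ZMod 2) = 0 := by decide
    rw [h2, zero_pow (by omega)]
  · refine Finset.sum_eq_zero fun i hi => Finset.sum_eq_zero fun A hA => ?_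
    rw [Finset.mem_range] at hi
    rw [Finset.mem_powersetCard] at hA
    rw [if_neg]
    intro hc
    have hcard := card_le_degsum μ A hc.1
    have := hc.2
    rw [hA.2] at this hcard
    omega

lemma esym_zero' (n : ℕ) : esym n 0 = 1 := by
  rw [esym]
  simp

lemma esym_big (n i : ℕ) (h : n < i) : esym n i = 0 := by
  rw [esym, Finset.powersetCard_eq_empty.mpr (by simpa using h), Finset.sum_empty]

lemma hmono_zero (n : ℕ) : hmono n 0 = 1 := by
  rw [hmono, Finset.finsuppAntidiag_zero, Finset.sum_singleton]
  simp

noncomputable def psi (n : ℕ) :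
    MvPolynomial (ℕ ⊕ ℕ) (ZMod 2) →ₐ[ZMod 2] MvPolynomial (Fin n) (ZMod 2) :=
  aeval (Sum.elim (fun i => esym n i) (fun j => hmono n j))

lemma psi_swW (n i : ℕ) : psi n (swW n i) = esym n i := by
  rw [swW]
  by_cases h0 : i = 0
  · subst h0
    simp [esym_zero']
  · rw [if_neg h0]
    by_cases h1 : i ≤ n
    · rw [if_pos h1, psi, aeval_X, Sum.elim_inl]
    · rw [if_neg h1, map_zero, esym_big n i (by omega)]

lemma psi_swWbar (n q j : ℕ) : psi n (swWbar q j) = if j ≤ q then hmono n j else 0 := by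
  rw [swWbar]
  by_cases h0 : j = 0
  · subst h0
    simp [hmono_zero]
  · rw [if_neg h0]
    by_cases h1 : j ≤ q
    · rw [if_pos h1, if_pos h1, psi, aeval_X, Sum.elim_inr]
    · rw [if_neg h1, if_neg h1, map_zero]

lemma psi_swRel (n q d : ℕ) (hd : 1 ≤ d) :
    psi n (swRel n q d)
    = ∑ i ∈ Finset.range (d + 1),
        (if q < d - i then esym n i * hmono n (d - i) else 0) := by
  rw [swRel, map_sum]
  have h1 : ∀ i ∈ Finset.range (d + 1),
      psi n (swW n i * swWbar q (d - i))
      = esym n i * (if d - i ≤ q then hmono n (d - i) else 0) := by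
    intro i _
    rw [map_mul, psi_swW, psi_swWbar]
  rw [Finset.sum_congr rfl h1]
  have h2 : (∑ i ∈ Finset.range (d + 1),
      esym n i * (if d - i ≤ q then hmono n (d - i) else 0))
      = (∑ i ∈ Finset.range (d + 1),
          esym n i * (if d - i ≤ q then hmono n (d - i) else 0))
        + ∑ i ∈ Finset.range (d + 1), esym n i * hmono n (d - i) := by
    rw [rel_identity n d hd, add_zero]
  rw [h2, ← Finset.sum_add_distrib]
  refine Finset.sum_congr rfl fun i _ => ?_
  by_cases h : d - i ≤ q
  · rw [if_pos h, if_neg (by omega), ← mul_add, CharTwo.add_self_eq_zero, mul_zero]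
  · rw [if_neg h, if_pos (by omega), mul_zero, zero_add]

lemma eps_psi_mul_swRel (n q d : ℕ) (hn : 1 ≤ n) (hq : n ≤ q) (hd : 1 ≤ d)
    (g : MvPolynomial (ℕ ⊕ ℕ) (ZMod 2)) :
    eps n q (psi n (g * swRel n q d)) = 0 := by
  rw [map_mul, psi_swRel n q d hd, Finset.mul_sum, eps_sum]
  refine Finset.sum_eq_zero fun i _ => ?_
  by_cases h : q < d - i
  · rw [if_pos h, ← mul_assoc]
    exact eps_mul_hmono n q (d - i) hn hq h _
  · rw [if_neg h, mul_zero, eps_zero]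

/-- In the mod 2 cohomology of the Grassmannian `G_n(ℝ^N)` with `2n ≤ N`, the power
`w_n(γ)^(N-n)` of the top Stiefel–Whitney class of the tautological bundle is nonzero. -/
theorem top_sw_power_ne_zero (n N : ℕ) (hn : 1 ≤ n) (hN : 2 * n ≤ N) :
    Ideal.Quotient.mk (grassIdeal n (N - n)) (swW n n ^ (N - n)) ≠ 0 := by
  set q := N - n with hqdef
  have hq : n ≤ q := by omega
  intro h0
  rw [Ideal.Quotient.eq_zero_iff_mem] at h0
  have key : ∀ g, eps n q (psi n (g * swW n n ^ q)) = 0 := by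
    have := Submodule.span_induction
      (p := fun x _ => ∀ g, eps n q (psi n (g * x)) = 0)
      (fun x hx => by
        obtain ⟨d, rfl⟩ := hx
        exact fun g => eps_psi_mul_swRel n q (d + 1) hn hq (by omega) g)
      (fun g => by rw [mul_zero, map_zero, eps_zero])
      (fun x y hx hy h1 h2 g => by
        rw [mul_add, map_add, eps_add, h1 g, h2 g, add_zero])
      (fun a x hx h1 g => by
        rw [smul_eq_mul, ← mul_assoc, h1 (g * a)])
      h0
    exact this
  have h1 := key 1
  rw [one_mul, map_pow, psi_swW] at h1
  rw [eps_esym_top_pow n q hn hq] at h1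
  exact one_ne_zero h1
end
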